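/- Suppose the principle (*) holds: (S1) for every infinite cardinal κ, 2^κ is weakly inaccessible and 2^λ = 2^κ whenever κ ≤ λ < 2^κ; (S2) for every infinite cardinal κ, Pr(2^κ) holds. Then every infinite Boolean algebra B has an irredundant subset A with 2^|A| = 2^|B|. -/

import Mathlib

open Cardinal

universe u

/-- An algebra: a carrier `M` with a set of finitary operations (for each arity `n`,
a set of `n`-ary functions). -/
structure FAlg (M : Type u) where
  ops : ∀ n : ℕ, Set ((Fin n → M) → M)

/-- `S` is a subalgebra: closed under all operations. -/
def FAlg.IsSubalg {M : Type u} (A : FAlg M) (S : Set M) : Prop :=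
  ∀ ⦃n : ℕ⦄, ∀ f ∈ A.ops n, ∀ x : Fin n → M, (∀ i, x i ∈ S) → f x ∈ S

/-- The least subalgebra containing `B`. -/
def FAlg.Cl {M : Type u} (A : FAlg M) (B : Set M) : Set M :=
  ⋂₀ {S : Set M | A.IsSubalg S ∧ B ⊆ S}

/-- `B` is free for the algebra `A`. -/
def FAlg.IsFree {M : Type u} (A : FAlg M) (B : Set M) : Prop :=
  ∀ a ∈ B, a ∉ A.Cl (B \ {a})

/-- The number of operations of the algebra. -/
def FAlg.opsCard {M : Type u} (A : FAlg M) : Cardinal.{u} :=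
  #(Σ n : ℕ, ↥(A.ops n))

/-- `Pr κ`: every algebra on a set of size `κ` with fewer than `κ` operations has a
free subset of cardinality `κ`. -/
def Pr (κ : Cardinal.{u}) : Prop :=
  ∀ (M : Type u) (A : FAlg M), #M = κ → A.opsCard < κ →
    ∃ B : Set M, A.IsFree B ∧ #B = κ

/-- `c` is weakly inaccessible: an uncountable regular limit cardinal. -/
def WInacc (c : Cardinal.{u}) : Prop :=
  ℵ₀ < c ∧ c.IsRegular ∧ Order.IsSuccLimit c

/-- `S` is (the underlying set of) a Boolean subalgebra. -/
def IsBSub {B : Type u} [BooleanAlgebra B] (S : Set B) : Prop :=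
  ⊥ ∈ S ∧ ⊤ ∈ S ∧ (∀ x ∈ S, ∀ y ∈ S, x ⊔ y ∈ S) ∧
    (∀ x ∈ S, ∀ y ∈ S, x ⊓ y ∈ S) ∧ ∀ x ∈ S, xᶜ ∈ S

/-- The Boolean subalgebra generated by `A`. -/
def BCl {B : Type u} [BooleanAlgebra B] (A : Set B) : Set B :=
  ⋂₀ {S : Set B | IsBSub S ∧ A ⊆ S}

/-- `A` is irredundant: no element is in the subalgebra generated by the others. -/
def Irredundant {B : Type u} [BooleanAlgebra B] (A : Set B) : Prop :=
  ∀ a ∈ A, a ∉ BCl (A \ {a})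


/-! ### Auxiliary lemmas -/

namespace Stmt9Aux

lemma falg_isSubalg_Cl {M : Type u} (A : FAlg M) (S : Set M) : A.IsSubalg (A.Cl S) :=
  fun _n f hf x hx T hT => hT.1 f hf x (fun i => hx i T hT)

lemma falg_subset_Cl {M : Type u} (A : FAlg M) (S : Set M) : S ⊆ A.Cl S :=
  fun _x hx _T hT => hT.2 hx

variable {B : Type u} [BooleanAlgebra B]

lemma subset_BCl (A : Set B) : A ⊆ BCl A := fun x hx S hS => hS.2 hx

lemma BCl_le {A S : Set B} (h1 : IsBSub S) (h2 : A ⊆ S) : BCl A ⊆ S :=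
  fun x hx => hx S ⟨h1, h2⟩

lemma isBSub_BCl (A : Set B) : IsBSub (BCl A) := by
  refine ⟨?_, ?_, ?_, ?_, ?_⟩
  · exact fun S hS => hS.1.1
  · exact fun S hS => hS.1.2.1
  · exact fun x hx y hy S hS => hS.1.2.2.1 x (hx S hS) y (hy S hS)
  · exact fun x hx y hy S hS => hS.1.2.2.2.1 x (hx S hS) y (hy S hS)
  · exact fun x hx S hS => hS.1.2.2.2.2 x (hx S hS)

lemma BCl_mono {A A' : Set B} (h : A ⊆ A') : BCl A ⊆ BCl A' :=
  BCl_le (isBSub_BCl A') (h.trans (subset_BCl A'))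

/-- one-step closure -/
def bstep (X : Set B) : Set B :=
  X ∪ {⊥, ⊤} ∪ ((fun p : B × B => p.1 ⊔ p.2) '' (X ×ˢ X)) ∪
    ((fun p : B × B => p.1 ⊓ p.2) '' (X ×ˢ X)) ∪ (compl '' X)

lemma subset_bstep (X : Set B) : X ⊆ bstep X := by
  intro x hx; exact Or.inl (Or.inl (Or.inl (Or.inl hx)))

def biter (S : Set B) : ℕ → Set B
  | 0 => S
  | n + 1 => bstep (biter S n)

lemma biter_subset_succ (S : Set B) (n : ℕ) : biter S n ⊆ biter S (n+1) :=
  subset_bstep _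

lemma biter_mono_n (S : Set B) : ∀ {m n : ℕ}, m ≤ n → biter S m ⊆ biter S n := by
  intro m n h
  induction h with
  | refl => exact le_refl _
  | step h ih => exact ih.trans (biter_subset_succ S _)

lemma bstep_mono {X Y : Set B} (h : X ⊆ Y) : bstep X ⊆ bstep Y := by
  intro x hx
  rcases hx with ((((h1|h2)|h3)|h4)|h5)
  · exact Or.inl (Or.inl (Or.inl (Or.inl (h h1))))
  · exact Or.inl (Or.inl (Or.inl (Or.inr h2)))
  · rcases h3 with ⟨p, ⟨hp1, hp2⟩, rfl⟩
    exact Or.inl (Or.inl (Or.inr ⟨p, ⟨h hp1, h hp2⟩, rfl⟩))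
  · rcases h4 with ⟨p, ⟨hp1, hp2⟩, rfl⟩
    exact Or.inl (Or.inr ⟨p, ⟨h hp1, h hp2⟩, rfl⟩)
  · rcases h5 with ⟨y, hy, rfl⟩
    exact Or.inr ⟨y, h hy, rfl⟩

lemma biter_mono_S {S T : Set B} (h : S ⊆ T) (n : ℕ) : biter S n ⊆ biter T n := by
  induction n with
  | zero => exact h
  | succ n ih => exact bstep_mono ih

lemma BCl_eq_iUnion (S : Set B) : BCl S = ⋃ n, biter S n := by
  apply subset_antisymm
  · apply BCl_le
    · refine ⟨?_, ?_, ?_, ?_, ?_⟩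
      · exact Set.mem_iUnion.2 ⟨1, Or.inl (Or.inl (Or.inl (Or.inr (Or.inl rfl))))⟩
      · exact Set.mem_iUnion.2 ⟨1, Or.inl (Or.inl (Or.inl (Or.inr (Or.inr rfl))))⟩
      · intro x hx y hy
        rcases Set.mem_iUnion.1 hx with ⟨m, hm⟩
        rcases Set.mem_iUnion.1 hy with ⟨n, hn⟩
        refine Set.mem_iUnion.2 ⟨max m n + 1, ?_⟩
        exact Or.inl (Or.inl (Or.inr ⟨(x, y),
          ⟨biter_mono_n S (le_max_left m n) hm, biter_mono_n S (le_max_right m n) hn⟩, rfl⟩))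
      · intro x hx y hy
        rcases Set.mem_iUnion.1 hx with ⟨m, hm⟩
        rcases Set.mem_iUnion.1 hy with ⟨n, hn⟩
        refine Set.mem_iUnion.2 ⟨max m n + 1, ?_⟩
        exact Or.inl (Or.inr ⟨(x, y),
          ⟨biter_mono_n S (le_max_left m n) hm, biter_mono_n S (le_max_right m n) hn⟩, rfl⟩)
      · intro x hx
        rcases Set.mem_iUnion.1 hx with ⟨m, hm⟩
        exact Set.mem_iUnion.2 ⟨m + 1, Or.inr ⟨x, hm, rfl⟩⟩
    · exact fun x hx => Set.mem_iUnion.2 ⟨0, hx⟩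
  · refine Set.iUnion_subset fun n => ?_
    induction n with
    | zero => exact subset_BCl S
    | succ n ih =>
      intro x hx
      rcases hx with ((((h1|h2)|h3)|h4)|h5)
      · exact ih h1
      · rcases h2 with h2|h2
        · rw [h2]; exact (isBSub_BCl S).1
        · rw [h2]; exact (isBSub_BCl S).2.1
      · rcases h3 with ⟨p, ⟨hp1, hp2⟩, rfl⟩
        exact (isBSub_BCl S).2.2.1 _ (ih hp1) _ (ih hp2)
      · rcases h4 with ⟨p, ⟨hp1, hp2⟩, rfl⟩
        exact (isBSub_BCl S).2.2.2.1 _ (ih hp1) _ (ih hp2)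
      · rcases h5 with ⟨y, hy, rfl⟩
        exact (isBSub_BCl S).2.2.2.2 _ (ih hy)

lemma mk_bstep_le (X : Set B) : #(bstep X) ≤ max #X ℵ₀ := by
  set m := max #X ℵ₀ with hmdef
  have hm : ℵ₀ ≤ m := le_max_right _ _
  have hX : #X ≤ m := le_max_left _ _
  have hprod : #(X ×ˢ X : Set (B × B)) ≤ m := by
    have : #(X ×ˢ X : Set (B × B)) = #X * #X := by
      rw [Cardinal.mk_congr (Equiv.Set.prod X X), Cardinal.mk_prod]; simp
    rw [this]
    calc #X * #X ≤ m * m := mul_le_mul' hX hX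
    _ = m := Cardinal.mul_eq_self hm
  have h2 : #({⊥, ⊤} : Set B) ≤ m := by
    refine le_trans Cardinal.mk_insert_le ?_
    rw [Cardinal.mk_singleton]
    exact Cardinal.add_le_of_le hm (le_trans Cardinal.one_le_aleph0 hm)
      (le_trans Cardinal.one_le_aleph0 hm)
  refine le_trans (Cardinal.mk_union_le _ _) ?_
  refine Cardinal.add_le_of_le hm ?_ (le_trans Cardinal.mk_image_le hX)
  refine le_trans (Cardinal.mk_union_le _ _) ?_
  refine Cardinal.add_le_of_le hm ?_ (le_trans Cardinal.mk_image_le hprod)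
  refine le_trans (Cardinal.mk_union_le _ _) ?_
  refine Cardinal.add_le_of_le hm ?_ (le_trans Cardinal.mk_image_le hprod)
  exact le_trans (Cardinal.mk_union_le _ _) (Cardinal.add_le_of_le hm hX h2)

lemma mk_biter_le (S : Set B) (n : ℕ) : #(biter S n) ≤ max #S ℵ₀ := by
  induction n with
  | zero => exact le_max_left _ _
  | succ n ih =>
    refine le_trans (mk_bstep_le _) ?_
    exact max_le (le_trans ih (le_refl _)) (le_max_right _ _)

lemma mk_BCl_le (S : Set B) : #(BCl S) ≤ max #S ℵ₀ := by
  rw [BCl_eq_iUnion]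
  have hre : (⋃ n, biter S n) = ⋃ (n : ULift.{u} ℕ), biter S n.down := by
    apply subset_antisymm
    · exact Set.iUnion_subset fun n =>
        Set.subset_iUnion (fun m : ULift.{u} ℕ => biter S m.down) (ULift.up n)
    · exact Set.iUnion_subset fun n => Set.subset_iUnion (fun m : ℕ => biter S m) n.down
  rw [hre]
  refine le_trans (Cardinal.mk_iUnion_le _) ?_
  have h1 : ⨆ n : ULift.{u} ℕ, #(biter S n.down) ≤ max #S ℵ₀ :=
    ciSup_le' fun n => mk_biter_le S n.down
  have h2 : #(ULift.{u} ℕ) = ℵ₀ := by simp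
  calc #(ULift.{u} ℕ) * ⨆ n : ULift.{u} ℕ, #(biter S n.down) ≤ ℵ₀ * max #S ℵ₀ := by
        exact mul_le_mul' (le_of_eq h2) h1
    _ ≤ max #S ℵ₀ * max #S ℵ₀ := mul_le_mul' (le_max_right _ _) (le_refl _)
    _ = max #S ℵ₀ := Cardinal.mul_eq_self (le_max_right _ _)

lemma biter_finitary {S : Set B} {x : B} {n : ℕ} (hx : x ∈ biter S n) :
    ∃ F : Set B, F ⊆ S ∧ F.Finite ∧ x ∈ biter F n := by
  induction n generalizing x with
  | zero => exact ⟨{x}, Set.singleton_subset_iff.2 hx, Set.finite_singleton x, rfl⟩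
  | succ n ih =>
    rcases hx with ((((h1|h2)|h3)|h4)|h5)
    · rcases ih h1 with ⟨F, hFS, hFf, hxF⟩
      exact ⟨F, hFS, hFf, biter_subset_succ F n hxF⟩
    · exact ⟨∅, Set.empty_subset S, Set.finite_empty,
        Or.inl (Or.inl (Or.inl (Or.inr h2)))⟩
    · rcases h3 with ⟨p, ⟨hp1, hp2⟩, rfl⟩
      rcases ih hp1 with ⟨F1, hF1S, hF1f, h1⟩
      rcases ih hp2 with ⟨F2, hF2S, hF2f, h2⟩
      refine ⟨F1 ∪ F2, Set.union_subset hF1S hF2S, hF1f.union hF2f, ?_⟩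
      exact Or.inl (Or.inl (Or.inr ⟨p, ⟨biter_mono_S Set.subset_union_left n h1,
        biter_mono_S Set.subset_union_right n h2⟩, rfl⟩))
    · rcases h4 with ⟨p, ⟨hp1, hp2⟩, rfl⟩
      rcases ih hp1 with ⟨F1, hF1S, hF1f, h1⟩
      rcases ih hp2 with ⟨F2, hF2S, hF2f, h2⟩
      refine ⟨F1 ∪ F2, Set.union_subset hF1S hF2S, hF1f.union hF2f, ?_⟩
      exact Or.inl (Or.inr ⟨p, ⟨biter_mono_S Set.subset_union_left n h1,
        biter_mono_S Set.subset_union_right n h2⟩, rfl⟩)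
    · rcases h5 with ⟨y, hy, rfl⟩
      rcases ih hy with ⟨F, hFS, hFf, h1⟩
      exact ⟨F, hFS, hFf, Or.inr ⟨y, h1, rfl⟩⟩

lemma BCl_finitary {S : Set B} {x : B} (hx : x ∈ BCl S) :
    ∃ F : Set B, F ⊆ S ∧ F.Finite ∧ x ∈ BCl F := by
  rw [BCl_eq_iUnion] at hx
  rcases Set.mem_iUnion.1 hx with ⟨n, hn⟩
  rcases biter_finitary hn with ⟨F, h1, h2, h3⟩
  exact ⟨F, h1, h2, by rw [BCl_eq_iUnion]; exact Set.mem_iUnion.2 ⟨n, h3⟩⟩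

lemma Irredundant.mono {A A' : Set B} (h : A' ⊆ A) (hA : Irredundant A) :
    Irredundant A' := fun a ha hmem =>
  hA a (h ha) (BCl_mono (Set.diff_subset_diff_left h) hmem)

lemma irredundant_sUnion_chain {c : Set (Set B)} (hc : IsChain (· ⊆ ·) c)
    (hne : c.Nonempty) (hirr : ∀ A ∈ c, Irredundant A) : Irredundant (⋃₀ c) := by
  classical
  intro a ha hmem
  rcases BCl_finitary hmem with ⟨F, hFsub, hFfin, haF⟩
  have key : ∀ (G : Finset B), ↑G ⊆ ⋃₀ c → ∃ t ∈ c, ↑G ⊆ t := by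
    intro G
    induction G using Finset.induction_on with
    | empty =>
      intro _
      rcases hne with ⟨t, ht⟩
      exact ⟨t, ht, by simp⟩
    | @insert x G hxG ih =>
      intro hins
      rw [Finset.coe_insert] at hins
      rcases ih ((Set.subset_insert x ↑G).trans hins) with ⟨t1, ht1, hGt1⟩
      rcases hins (Set.mem_insert x ↑G) with ⟨t2, ht2, hxt2⟩
      rcases IsChain.total hc ht1 ht2 with h | h
      · exact ⟨t2, ht2, by rw [Finset.coe_insert]; exact Set.insert_subset hxt2 (hGt1.trans h)⟩
      · exact ⟨t1, ht1, by rw [Finset.coe_insert]; exact Set.insert_subset (h hxt2) hGt1⟩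
  rcases Set.mem_sUnion.1 ha with ⟨t0, ht0c, hat0⟩
  have hFsub2 : ↑(insert a hFfin.toFinset) ⊆ ⋃₀ c := by
    rw [Finset.coe_insert, Set.Finite.coe_toFinset]
    exact Set.insert_subset (Set.mem_sUnion.2 ⟨t0, ht0c, hat0⟩) (hFsub.trans Set.diff_subset)
  rcases key (insert a hFfin.toFinset) hFsub2 with ⟨t, htc, hsub⟩
  rw [Finset.coe_insert, Set.Finite.coe_toFinset] at hsub
  have haT : a ∈ t := hsub (Set.mem_insert a F)
  have hFt : F ⊆ t \ {a} := by
    intro y hy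
    exact ⟨hsub (Set.mem_insert_of_mem a hy), (hFsub hy).2⟩
  exact hirr t htc a haT (BCl_mono hFt haF)

lemma exists_maximal_irredundant :
    ∃ M : Set B, Irredundant M ∧ ∀ A : Set B, Irredundant A → M ⊆ A → A = M := by
  have h := zorn_subset_nonempty {A : Set B | Irredundant A} ?_ ∅ ?_
  · rcases h with ⟨M, -, hmax⟩
    refine ⟨M, hmax.prop, fun A hA hMA => ?_⟩
    exact subset_antisymm (hmax.le_of_ge hA hMA) hMA
  · intro c hcS hchain hcne
    refine ⟨⋃₀ c, irredundant_sUnion_chain hchain hcne (fun A hA => hcS hA), ?_⟩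
    exact fun s hs => Set.subset_sUnion_of_mem hs
  · intro a ha
    exact absurd ha (Set.notMem_empty a)

lemma nf_inf (b x y x' y' : B) :
    ((x ⊓ b) ⊔ (y ⊓ bᶜ)) ⊓ ((x' ⊓ b) ⊔ (y' ⊓ bᶜ)) = ((x ⊓ x') ⊓ b) ⊔ ((y ⊓ y') ⊓ bᶜ) := by
  rw [inf_sup_right, inf_sup_left, inf_sup_left]
  have t1 : (x ⊓ b) ⊓ (x' ⊓ b) = (x ⊓ x') ⊓ b := by
    have : (x ⊓ b) ⊓ (x' ⊓ b) = (x ⊓ x') ⊓ (b ⊓ b) := by ac_rfl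
    rw [this, inf_idem]
  have t2 : (x ⊓ b) ⊓ (y' ⊓ bᶜ) = ⊥ := by
    have : (x ⊓ b) ⊓ (y' ⊓ bᶜ) = (x ⊓ y') ⊓ (b ⊓ bᶜ) := by ac_rfl
    rw [this, inf_compl_eq_bot, inf_bot_eq]
  have t3 : (y ⊓ bᶜ) ⊓ (x' ⊓ b) = ⊥ := by
    have : (y ⊓ bᶜ) ⊓ (x' ⊓ b) = (y ⊓ x') ⊓ (b ⊓ bᶜ) := by ac_rfl
    rw [this, inf_compl_eq_bot, inf_bot_eq]
  have t4 : (y ⊓ bᶜ) ⊓ (y' ⊓ bᶜ) = (y ⊓ y') ⊓ bᶜ := by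
    have : (y ⊓ bᶜ) ⊓ (y' ⊓ bᶜ) = (y ⊓ y') ⊓ (bᶜ ⊓ bᶜ) := by ac_rfl
    rw [this, inf_idem]
  rw [t1, t2, t3, t4, sup_bot_eq, bot_sup_eq]

lemma nf_sup (b x y x' y' : B) :
    ((x ⊓ b) ⊔ (y ⊓ bᶜ)) ⊔ ((x' ⊓ b) ⊔ (y' ⊓ bᶜ)) = ((x ⊔ x') ⊓ b) ⊔ ((y ⊔ y') ⊓ bᶜ) := by
  rw [inf_sup_right, inf_sup_right]
  ac_rfl

lemma nf_compl (b x y : B) : ((x ⊓ b) ⊔ (y ⊓ bᶜ))ᶜ = (xᶜ ⊓ b) ⊔ (yᶜ ⊓ bᶜ) := by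
  have hc : IsCompl ((x ⊓ b) ⊔ (y ⊓ bᶜ)) ((xᶜ ⊓ b) ⊔ (yᶜ ⊓ bᶜ)) := by
    apply IsCompl.of_eq
    · rw [nf_inf, inf_compl_eq_bot, bot_inf_eq, inf_compl_eq_bot, bot_inf_eq, sup_idem]
    · rw [nf_sup, sup_compl_eq_top, top_inf_eq, sup_compl_eq_top, top_inf_eq, sup_compl_eq_top]
  exact hc.compl_eq

/-- Normal form: elements of `BCl (insert b S)` have the form `(x ⊓ b) ⊔ (y ⊓ bᶜ)`. -/
lemma BCl_insert_normal_form (b : B) (S : Set B) :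
    BCl (insert b S) ⊆ {z | ∃ x ∈ BCl S, ∃ y ∈ BCl S, z = (x ⊓ b) ⊔ (y ⊓ bᶜ)} := by
  apply BCl_le
  · refine ⟨⟨⊥, (isBSub_BCl S).1, ⊥, (isBSub_BCl S).1, by simp⟩,
      ⟨⊤, (isBSub_BCl S).2.1, ⊤, (isBSub_BCl S).2.1, by simp⟩, ?_, ?_, ?_⟩
    · rintro _ ⟨x, hx, y, hy, rfl⟩ _ ⟨x', hx', y', hy', rfl⟩
      exact ⟨x ⊔ x', (isBSub_BCl S).2.2.1 x hx x' hx', y ⊔ y',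
        (isBSub_BCl S).2.2.1 y hy y' hy', nf_sup b x y x' y'⟩
    · rintro _ ⟨x, hx, y, hy, rfl⟩ _ ⟨x', hx', y', hy', rfl⟩
      exact ⟨x ⊓ x', (isBSub_BCl S).2.2.2.1 x hx x' hx', y ⊓ y',
        (isBSub_BCl S).2.2.2.1 y hy y' hy', nf_inf b x y x' y'⟩
    · rintro _ ⟨x, hx, y, hy, rfl⟩
      exact ⟨xᶜ, (isBSub_BCl S).2.2.2.2 x hx, yᶜ, (isBSub_BCl S).2.2.2.2 y hy,
        nf_compl b x y⟩
  · intro z hz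
    rcases hz with rfl | hz
    · exact ⟨⊤, (isBSub_BCl S).2.1, ⊥, (isBSub_BCl S).1, by simp⟩
    · refine ⟨z, subset_BCl S hz, z, subset_BCl S hz, ?_⟩
      rw [← inf_sup_left, sup_compl_eq_top, inf_top_eq]

lemma le_of_inf_compl_eq_bot {m y : B} (h : m ⊓ yᶜ = ⊥) : m ≤ y := by
  have : m = m ⊓ y := by
    conv_lhs => rw [← inf_top_eq m, ← sup_compl_eq_top (x := y), inf_sup_left, h, sup_bot_eq]
  rw [this]; exact inf_le_right

lemma dense_of_maximal_irredundant {M : Set B} (hM : Irredundant M)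
    (hmax : ∀ A : Set B, Irredundant A → M ⊆ A → A = M) :
    ∀ b : B, b ≠ ⊥ → ∃ d ∈ BCl M, d ≠ ⊥ ∧ d ≤ b := by
  by_contra hcon
  push_neg at hcon
  rcases hcon with ⟨b, hbne, hb⟩
  have hb' : ∀ d ∈ BCl M, d ≤ b → d = ⊥ := by
    intro d hd hdb
    by_contra hdne
    exact (hb d hd hdne) hdb
  have hbM : b ∉ BCl M := fun h => hbne (hb' b h le_rfl)
  have hirr : Irredundant (insert b M) := by
    intro a ha hmem
    rcases ha with rfl | haM
    · have : insert a M \ {a} ⊆ M := by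
        intro x hx
        rcases hx.1 with rfl | hxM
        · exact absurd rfl hx.2
        · exact hxM
      exact hbM (BCl_mono this hmem)
    · have hsub : insert b M \ {a} ⊆ insert b (M \ {a}) := by
        intro x hx
        rcases hx.1 with rfl | hxM
        · exact Set.mem_insert x _
        · exact Set.mem_insert_of_mem b ⟨hxM, hx.2⟩
      have := BCl_insert_normal_form b (M \ {a}) (BCl_mono hsub hmem)
      rcases this with ⟨x, hx, y, hy, hxy⟩
      set d := (a ⊓ yᶜ) ⊔ (y ⊓ aᶜ) with hd
      have hyM : y ∈ BCl M := BCl_mono Set.diff_subset hy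
      have haBM : a ∈ BCl M := subset_BCl M haM
      have hdM : d ∈ BCl M :=
        (isBSub_BCl M).2.2.1 _
          ((isBSub_BCl M).2.2.2.1 a haBM yᶜ ((isBSub_BCl M).2.2.2.2 y hyM)) _
          ((isBSub_BCl M).2.2.2.1 y hyM aᶜ ((isBSub_BCl M).2.2.2.2 a haBM))
      have habc : a ⊓ bᶜ = y ⊓ bᶜ := by
        rw [hxy, inf_sup_right]
        have e1 : (x ⊓ b) ⊓ bᶜ = ⊥ := by rw [inf_assoc, inf_compl_eq_bot, inf_bot_eq]
        have e2 : (y ⊓ bᶜ) ⊓ bᶜ = y ⊓ bᶜ := by rw [inf_assoc, inf_idem]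
        rw [e1, e2, bot_sup_eq]
      have hdbc : d ⊓ bᶜ = ⊥ := by
        rw [hd, inf_sup_right]
        have e1 : (a ⊓ yᶜ) ⊓ bᶜ = ⊥ := by
          have : (a ⊓ yᶜ) ⊓ bᶜ = (a ⊓ bᶜ) ⊓ yᶜ := by ac_rfl
          rw [this, habc]
          have : (y ⊓ bᶜ) ⊓ yᶜ = (y ⊓ yᶜ) ⊓ bᶜ := by ac_rfl
          rw [this, inf_compl_eq_bot, bot_inf_eq]
        have e2 : (y ⊓ aᶜ) ⊓ bᶜ = ⊥ := by
          have : (y ⊓ aᶜ) ⊓ bᶜ = (y ⊓ bᶜ) ⊓ aᶜ := by ac_rfl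
          rw [this, ← habc]
          have : (a ⊓ bᶜ) ⊓ aᶜ = (a ⊓ aᶜ) ⊓ bᶜ := by ac_rfl
          rw [this, inf_compl_eq_bot, bot_inf_eq]
        rw [e1, e2, sup_bot_eq]
      have hdb : d ≤ b := by
        have : d = d ⊓ b := by
          conv_lhs => rw [← inf_top_eq d, ← sup_compl_eq_top (x := b), inf_sup_left, hdbc,
            sup_bot_eq]
        rw [this]; exact inf_le_right
      have hdbot : d = ⊥ := hb' d hdM hdb
      have hay : a = y := by
        have h1 : a ⊓ yᶜ = ⊥ := by
          have := hdbot
          rw [hd] at this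
          exact le_bot_iff.1 (le_trans le_sup_left this.le)
        have h2 : y ⊓ aᶜ = ⊥ := by
          have := hdbot
          rw [hd] at this
          exact le_bot_iff.1 (le_trans le_sup_right this.le)
        exact le_antisymm (le_of_inf_compl_eq_bot h1) (le_of_inf_compl_eq_bot h2)
      exact hM a haM (hay ▸ hy)
  have heq := hmax (insert b M) hirr (Set.subset_insert b M)
  have : b ∈ M := heq ▸ Set.mem_insert b M
  exact hbM (subset_BCl M this)

lemma mk_le_two_power_of_dense {D : Set B}
    (hD : ∀ b : B, b ≠ ⊥ → ∃ d ∈ D, d ≠ ⊥ ∧ d ≤ b) :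
    Cardinal.mk B ≤ (2 : Cardinal.{u}) ^ #D := by
  have hinj : Function.Injective (fun b : B => {d : D | (d : B) ≤ b ∧ (d : B) ≠ ⊥}) := by
    intro b1 b2 heq
    by_contra hne
    have key : ∀ u v : B, u ⊓ vᶜ ≠ ⊥ →
        ({d : D | (d : B) ≤ u ∧ (d : B) ≠ ⊥} : Set D) ≠ {d : D | (d : B) ≤ v ∧ (d : B) ≠ ⊥} := by
      intro u v huv habs
      rcases hD _ huv with ⟨d0, hd0D, hd0ne, hd0le⟩
      have hmem : (⟨d0, hd0D⟩ : D) ∈ {d : D | (d : B) ≤ u ∧ (d : B) ≠ ⊥} :=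
        ⟨le_trans hd0le inf_le_left, hd0ne⟩
      rw [habs] at hmem
      have hle : d0 ≤ v := hmem.1
      have : d0 ≤ v ⊓ vᶜ := le_inf hle (le_trans hd0le inf_le_right)
      rw [inf_compl_eq_bot] at this
      exact hd0ne (le_bot_iff.1 this)
    rcases (not_and_or.1 (fun hle : b1 ≤ b2 ∧ b2 ≤ b1 => hne (le_antisymm hle.1 hle.2))) with h | h
    · have : b1 ⊓ b2ᶜ ≠ ⊥ := fun habs => h (le_of_inf_compl_eq_bot habs)
      exact key b1 b2 this heq
    · have : b2 ⊓ b1ᶜ ≠ ⊥ := fun habs => h (le_of_inf_compl_eq_bot habs)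
      exact key b2 b1 this heq.symm
  calc #B ≤ #(Set D) := Cardinal.mk_le_of_injective hinj
    _ = (2 : Cardinal.{u}) ^ #D := Cardinal.mk_set

lemma BCl_finite {F : Set B} (hF : F.Finite) : (BCl F).Finite := by
  induction F, hF using Set.Finite.induction_on with
  | empty =>
    have hsub : BCl (∅ : Set B) ⊆ {⊥, ⊤} := by
      apply BCl_le
      · refine ⟨Or.inl rfl, Or.inr rfl, ?_, ?_, ?_⟩
        · rintro x (rfl | rfl) y (rfl | rfl) <;> simp
        · rintro x (rfl | rfl) y (rfl | rfl) <;> simp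
        · rintro x (rfl | rfl) <;> simp
      · exact Set.empty_subset _
    exact ((Set.finite_singleton ⊤).insert ⊥).subset hsub
  | @insert a F' _ _ ih =>
    have hsub := BCl_insert_normal_form a F'
    have himg : {z | ∃ x ∈ BCl F', ∃ y ∈ BCl F', z = (x ⊓ a) ⊔ (y ⊓ aᶜ)} =
        (fun p : B × B => (p.1 ⊓ a) ⊔ (p.2 ⊓ aᶜ)) '' ((BCl F') ×ˢ (BCl F')) := by
      ext z
      constructor
      · rintro ⟨x, hx, y, hy, rfl⟩
        exact ⟨(x, y), ⟨hx, hy⟩, rfl⟩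
      · rintro ⟨⟨x, y⟩, ⟨hx, hy⟩, rfl⟩
        exact ⟨x, hx, y, hy, rfl⟩
    refine Set.Finite.subset ?_ hsub
    rw [himg]
    exact ((ih.prod ih).image _)

/-- The Boolean operations as an `FAlg` on (the coercion of) a closed subset. -/
def bops (T : Set B) (hT : IsBSub T) : FAlg ↥T where
  ops n :=
    match n with
    | 0 => {fun _ => ⟨⊥, hT.1⟩, fun _ => ⟨⊤, hT.2.1⟩}
    | 1 => {fun x => ⟨(↑(x 0))ᶜ, hT.2.2.2.2 _ (x 0).2⟩}
    | 2 => {fun x => ⟨↑(x 0) ⊔ ↑(x 1), hT.2.2.1 _ (x 0).2 _ (x 1).2⟩,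
            fun x => ⟨↑(x 0) ⊓ ↑(x 1), hT.2.2.2.1 _ (x 0).2 _ (x 1).2⟩}
    | _ => ∅

lemma bops_opsCard_le (T : Set B) (hT : IsBSub T) : (bops T hT).opsCard ≤ ℵ₀ := by
  have hfin : ∀ n : ℕ, ((bops T hT).ops n).Finite := by
    intro n
    match n with
    | 0 => exact (Set.finite_singleton _).insert _
    | 1 => exact Set.finite_singleton _
    | 2 => exact (Set.finite_singleton _).insert _
    | (n+3) => exact Set.finite_empty
  have : ∀ n : ℕ, Countable ↥((bops T hT).ops n) := fun n => (hfin n).countable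
  have : Countable (Σ n : ℕ, ↥((bops T hT).ops n)) := by infer_instance
  exact Cardinal.mk_le_aleph0

lemma irredundant_of_free {T : Set B} (hT : IsBSub T) (Af : Set ↥T)
    (hfree : (bops T hT).IsFree Af) : Irredundant ((↑) '' Af : Set B) := by
  intro a ha hmem
  rcases ha with ⟨a', ha', rfl⟩
  set Alg := bops T hT with hAlg
  set Cl := Alg.Cl (Af \ {a'}) with hCl
  have hsubalg := falg_isSubalg_Cl Alg (Af \ {a'})
  have hTimg : IsBSub ((↑) '' Cl : Set B) := by
    refine ⟨?_, ?_, ?_, ?_, ?_⟩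
    · refine ⟨⟨⊥, hT.1⟩, ?_, rfl⟩
      exact hsubalg (n := 0) _ (Or.inl rfl) (fun i => i.elim0) (fun i => i.elim0)
    · refine ⟨⟨⊤, hT.2.1⟩, ?_, rfl⟩
      exact hsubalg (n := 0) _ (Or.inr rfl) (fun i => i.elim0) (fun i => i.elim0)
    · rintro _ ⟨x, hx, rfl⟩ _ ⟨y, hy, rfl⟩
      refine ⟨_, hsubalg (n := 2) _ (Or.inl rfl) ![x, y] ?_, rfl⟩
      intro i
      fin_cases i
      · simpa using hx
      · simpa using hy
    · rintro _ ⟨x, hx, rfl⟩ _ ⟨y, hy, rfl⟩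
      refine ⟨_, hsubalg (n := 2) _ (Or.inr rfl) ![x, y] ?_, rfl⟩
      intro i
      fin_cases i
      · simpa using hx
      · simpa using hy
    · rintro _ ⟨x, hx, rfl⟩
      refine ⟨_, hsubalg (n := 1) _ rfl ![x] ?_, rfl⟩
      intro i
      fin_cases i; simpa using hx
  have hcontains : ((↑) '' Af : Set B) \ {(a' : B)} ⊆ ((↑) '' Cl : Set B) := by
    rintro _ ⟨⟨x, hxAf, rfl⟩, hxne⟩
    refine ⟨x, falg_subset_Cl Alg _ ⟨hxAf, ?_⟩, rfl⟩
    intro hxa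
    rw [Set.mem_singleton_iff] at hxa
    exact hxne (by rw [hxa]; exact rfl)
  have := BCl_le hTimg hcontains hmem
  rcases this with ⟨c, hc, hca⟩
  have : c = a' := Subtype.val_injective hca
  rw [this] at hc
  exact hfree a' ha' hc

end Stmt9Aux

/-- The principle `(*)` implies that every infinite Boolean algebra `B` has an
irredundant subset `A` with `2^|A| = 2^|B|`. -/
theorem stmt_9
    (S1 : ∀ κ : Cardinal.{u}, ℵ₀ ≤ κ →
      WInacc ((2 : Cardinal.{u}) ^ κ) ∧ ∀ l : Cardinal.{u}, κ ≤ l → l < (2 : Cardinal.{u}) ^ κ → (2 : Cardinal.{u}) ^ l = (2 : Cardinal.{u}) ^ κ)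
    (S2 : ∀ κ : Cardinal.{u}, ℵ₀ ≤ κ → Pr ((2 : Cardinal.{u}) ^ κ))
    (B : Type u) [BooleanAlgebra B] [Infinite B] :
    ∃ A : Set B, Irredundant A ∧ (2 : Cardinal.{u}) ^ #A = (2 : Cardinal.{u}) ^ #B := by
  classical
  have hlaminf : ℵ₀ ≤ #B := Cardinal.aleph0_le_mk B
  set lam := #B with hlam
  set SS : Set Cardinal.{u} := {c | ℵ₀ ≤ c ∧ (2 : Cardinal.{u}) ^ c = 2 ^ lam} with hSS
  have hSne : SS.Nonempty := ⟨lam, hlaminf, rfl⟩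
  set σ := sInf SS with hsigma
  have hσS : σ ∈ SS := csInf_mem hSne
  have hσinf : ℵ₀ ≤ σ := hσS.1
  have hσpow : (2 : Cardinal.{u}) ^ σ = 2 ^ lam := hσS.2
  have hσmin : ∀ c ∈ SS, σ ≤ c := fun c hc => csInf_le' hc
  have hσle : σ ≤ lam := hσmin lam ⟨hlaminf, rfl⟩
  by_cases hcase : ∀ θ : Cardinal.{u}, ℵ₀ ≤ θ → θ < σ → (2 : Cardinal.{u}) ^ θ < σ
  · -- "strong limit" case: use a maximal irredundant set
    obtain ⟨M, hMirr, hMmax⟩ := Stmt9Aux.exists_maximal_irredundant (B := B)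
    have hdense := Stmt9Aux.dense_of_maximal_irredundant hMirr hMmax
    have hbound : #B ≤ (2 : Cardinal.{u}) ^ #(BCl M) :=
      Stmt9Aux.mk_le_two_power_of_dense (D := BCl M) hdense
    have hMbig : σ ≤ #M := by
      by_contra hlt
      push_neg at hlt
      rcases lt_or_ge (#M) ℵ₀ with hfin | hinf
      · have hMfin : M.Finite := Cardinal.lt_aleph0_iff_set_finite.1 hfin
        have hDfin : (BCl M).Finite := Stmt9Aux.BCl_finite hMfin
        have h2 : (2 : Cardinal.{u}) ^ #(BCl M) < ℵ₀ :=
          Cardinal.power_lt_aleph0 (Cardinal.nat_lt_aleph0 2)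
            (Cardinal.lt_aleph0_iff_set_finite.2 hDfin)
        exact absurd (hbound.trans_lt h2) (not_lt.2 (Cardinal.aleph0_le_mk B))
      · have hD : #(BCl M) ≤ #M := le_trans (Stmt9Aux.mk_BCl_le M) (max_le le_rfl hinf)
        have h2 : (2 : Cardinal.{u}) ^ #(BCl M) ≤ 2 ^ #M :=
          Cardinal.power_le_power_left (by norm_num) hD
        have h3 : (2 : Cardinal.{u}) ^ #M < σ := hcase _ hinf hlt
        have : lam < σ := lt_of_le_of_lt (hbound.trans h2) h3
        exact absurd hσle (not_le.2 this)
    obtain ⟨A, hAM, hAcard⟩ := Cardinal.le_mk_iff_exists_subset.1 hMbig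
    exact ⟨A, Stmt9Aux.Irredundant.mono hAM hMirr, by rw [hAcard, hσpow]⟩
  · push_neg at hcase
    obtain ⟨θ, hθinf, hθσ, hθpow⟩ := hcase
    set ν := (2 : Cardinal.{u}) ^ θ with hν
    have hνinf : ℵ₀ < ν := lt_of_le_of_lt hθinf (Cardinal.cantor θ)
    have hνlam : ν ≤ lam := by
      by_contra h
      push_neg at h
      have hθlam : θ ≤ lam := le_trans hθσ.le hσle
      have hpow := (S1 θ hθinf).2 lam hθlam h
      have hθSS : θ ∈ SS := ⟨hθinf, hpow.symm⟩
      exact absurd (hσmin θ hθSS) (not_le.2 hθσ)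
    obtain ⟨S, hScard⟩ : ∃ S : Set B, #S = ν := Cardinal.le_mk_iff_exists_set.1 hνlam
    have hTcard : #(BCl S) = ν := by
      apply le_antisymm
      · refine le_trans (Stmt9Aux.mk_BCl_le S) ?_
        rw [hScard]
        exact max_le le_rfl hνinf.le
      · rw [← hScard]
        exact Cardinal.mk_le_mk_of_subset (Stmt9Aux.subset_BCl S)
    have hop : (Stmt9Aux.bops (BCl S) (Stmt9Aux.isBSub_BCl S)).opsCard < ν :=
      lt_of_le_of_lt (Stmt9Aux.bops_opsCard_le _ _) hνinf
    obtain ⟨Af, hAfree, hAfcard⟩ :=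
      S2 θ hθinf ↥(BCl S) (Stmt9Aux.bops (BCl S) (Stmt9Aux.isBSub_BCl S)) hTcard hop
    have hAirr := Stmt9Aux.irredundant_of_free (Stmt9Aux.isBSub_BCl S) Af hAfree
    refine ⟨(↑) '' Af, hAirr, ?_⟩
    have hAcard : #((↑) '' Af : Set B) = ν := by
      rw [Cardinal.mk_image_eq Subtype.val_injective]
      exact hAfcard
    rw [hAcard]
    have h1 : ν < (2 : Cardinal.{u}) ^ σ := by
      rw [hσpow]
      exact lt_of_le_of_lt hνlam (Cardinal.cantor lam)
    have h2 := (S1 σ hσinf).2 ν hθpow h1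
    rw [h2, hσpow]
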